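/- Let q be a prime power, ℓ ≤ m be positive integers, and 1 ≤ r ≤ ℓ. The number of matrices M ∈ Mat_{ℓ×m}(F_q) with rank(M) = 1 and M_{11} + M_{22} + ⋯ + M_{rr} ≠ 0 equals q^{ℓ+m−r−1}(q^r − 1). -/

import Mathlib

open Matrix Module Submodule

section Aux
variable {K : Type*} [Field K]

lemma aux_rank_vecMulVec_one {l m : ℕ} {u : Fin l → K} {v : Fin m → K}
    (hu : u ≠ 0) (hv : v ≠ 0) : (Matrix.vecMulVec u v).rank = 1 := by
  classical
  rw [Matrix.rank_eq_finrank_span_cols]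
  have hspan : span K (Set.range (Matrix.vecMulVec u v)ᵀ) = span K {u} := by
    apply le_antisymm
    · rw [span_le]
      rintro _ ⟨j, rfl⟩
      have hcol : (Matrix.vecMulVec u v)ᵀ j = v j • u := by
        ext i
        simp [Matrix.vecMulVec_apply, mul_comm]
      rw [hcol]
      exact smul_mem _ _ (subset_span rfl)
    · rw [span_le, Set.singleton_subset_iff]
      obtain ⟨j, hj⟩ := Function.ne_iff.mp hv
      have hj' : v j ≠ 0 := by simpa using hj
      have hu' : u = (v j)⁻¹ • ((Matrix.vecMulVec u v)ᵀ j) := by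
        ext i
        simp only [Pi.smul_apply, Matrix.transpose_apply, Matrix.vecMulVec_apply, smul_eq_mul]
        rw [mul_comm (u i) (v j), ← mul_assoc, inv_mul_cancel₀ hj', one_mul]
      have hmem := smul_mem (span K (Set.range (Matrix.vecMulVec u v)ᵀ)) (v j)⁻¹
        (subset_span ⟨j, rfl⟩)
      rw [← hu'] at hmem
      exact hmem
  rw [show (Matrix.vecMulVec u v).col = (Matrix.vecMulVec u v)ᵀ from rfl, hspan]
  exact finrank_span_singleton hu

lemma aux_minor {l m : ℕ} {M : Matrix (Fin l) (Fin m) K} (h : M.rank = 1)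
    {i₀ : Fin l} {j₀ : Fin m} (h₀ : M i₀ j₀ ≠ 0) (i : Fin l) (j : Fin m) :
    M i j * M i₀ j₀ = M i j₀ * M i₀ j := by
  classical
  have hft : Mᵀ j₀ ≠ 0 := by
    intro hz
    exact h₀ (by simpa using congrFun hz i₀)
  have hle : span K {Mᵀ j₀} ≤ span K (Set.range Mᵀ) :=
    span_mono (Set.singleton_subset_iff.mpr ⟨j₀, rfl⟩)
  have heq : span K {Mᵀ j₀} = span K (Set.range Mᵀ) := by
    apply eq_of_le_of_finrank_le hle
    change finrank K (span K (Set.range M.col)) ≤ _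
    rw [← Matrix.rank_eq_finrank_span_cols, h, finrank_span_singleton hft]
  have hmem : Mᵀ j ∈ span K {Mᵀ j₀} := by
    rw [heq]; exact subset_span ⟨j, rfl⟩
  obtain ⟨a, ha⟩ := mem_span_singleton.mp hmem
  have h1 : M i j = a * M i j₀ := by simpa using (congrFun ha i).symm
  have h2 : M i₀ j = a * M i₀ j₀ := by simpa using (congrFun ha i₀).symm
  rw [h1, h2]; ring

end Aux

lemma aux_card_ker (K : Type*) [Field K] [Fintype K] {V W : Type*}
    [AddCommGroup V] [Module K V] [Fintype V] [AddCommGroup W] [Module K W]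
    [FiniteDimensional K W] (φ : V →ₗ[K] W) (hs : Function.Surjective φ) :
    Nat.card {v : V // φ v = 0} = Fintype.card K ^ (finrank K V - finrank K W) := by
  classical
  have e : {v : V // φ v = 0} ≃ LinearMap.ker φ :=
    Equiv.subtypeEquivRight fun v => (LinearMap.mem_ker).symm
  rw [Nat.card_congr e, Nat.card_eq_fintype_card,
    card_eq_pow_finrank (K := K) (V := LinearMap.ker φ)]
  congr 1
  have h1 := LinearMap.finrank_range_add_finrank_ker φ
  rw [LinearMap.range_eq_top.mpr hs, finrank_top] at h1
  omega

lemma aux_card_ne (K : Type*) [Field K] [Fintype K] {V W : Type*}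
    [AddCommGroup V] [Module K V] [Fintype V] [AddCommGroup W] [Module K W]
    [FiniteDimensional K W] (φ : V →ₗ[K] W) (hs : Function.Surjective φ) :
    Nat.card {v : V // φ v ≠ 0} =
      Fintype.card K ^ finrank K V - Fintype.card K ^ (finrank K V - finrank K W) := by
  classical
  rw [Nat.card_eq_fintype_card, Fintype.card_subtype_compl,
    card_eq_pow_finrank (K := K) (V := V), ← aux_card_ker K φ hs, Nat.card_eq_fintype_card]

lemma aux_surj_of_ne_zero {K V : Type*} [Field K] [AddCommGroup V] [Module K V]
    (φ : V →ₗ[K] K) (hφ : φ ≠ 0) : Function.Surjective φ := by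
  obtain ⟨v, hv⟩ := DFunLike.ne_iff.mp hφ
  have hv' : φ v ≠ 0 := by simpa using hv
  intro s
  refine ⟨(s * (φ v)⁻¹) • v, ?_⟩
  rw [LinearMap.map_smul, smul_eq_mul, mul_assoc, inv_mul_cancel₀ hv', mul_one]

/-- The number of rank-one `ℓ × m` matrices over a finite field with `q` elements whose `r`-th
partial trace `M 1 1 + ⋯ + M r r` is nonzero equals `q ^ (ℓ + m - r - 1) * (q ^ r - 1)`. -/
theorem count_rank_one_partial_trace_ne_zero (K : Type*) [Field K] [Fintype K] (q ℓ m r : ℕ)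
    (hq : Fintype.card K = q) (hℓ : 0 < ℓ) (hℓm : ℓ ≤ m) (hr1 : 1 ≤ r) (hrℓ : r ≤ ℓ) :
    Nat.card {M : Matrix (Fin ℓ) (Fin m) K // M.rank = 1 ∧
      ∑ i : Fin r, M (Fin.castLE hrℓ i) (Fin.castLE (hrℓ.trans hℓm) i) ≠ 0} =
      q ^ (ℓ + m - r - 1) * (q ^ r - 1) := by
  classical
  subst hq
  set q := Fintype.card K with hqq
  have hq2 : 1 < q := Fintype.one_lt_card
  have hm1 : 0 < m := lt_of_lt_of_le hℓ hℓm
  -- index picking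
  have hex : ∀ M : Matrix (Fin ℓ) (Fin m) K,
      ∑ i : Fin r, M (Fin.castLE hrℓ i) (Fin.castLE (hrℓ.trans hℓm) i) ≠ 0 →
      ∃ i : Fin r, M (Fin.castLE hrℓ i) (Fin.castLE (hrℓ.trans hℓm) i) ≠ 0 := by
    intro M hM
    by_contra hc
    push_neg at hc
    exact hM (Finset.sum_eq_zero fun i _ => hc i)
  let D : Matrix (Fin ℓ) (Fin m) K → Fin r := fun M =>
    if h : ∃ i : Fin r, M (Fin.castLE hrℓ i) (Fin.castLE (hrℓ.trans hℓm) i) ≠ 0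
    then h.choose else ⟨0, hr1⟩
  have hD : ∀ (M : Matrix (Fin ℓ) (Fin m) K),
      (∃ i : Fin r, M (Fin.castLE hrℓ i) (Fin.castLE (hrℓ.trans hℓm) i) ≠ 0) →
      M (Fin.castLE hrℓ (D M)) (Fin.castLE (hrℓ.trans hℓm) (D M)) ≠ 0 := by
    intro M h
    simp only [D, dif_pos h]
    exact h.choose_spec
  let P := {p : (Fin ℓ → K) × (Fin m → K) //
      ∑ i : Fin r, p.1 (Fin.castLE hrℓ i) * p.2 (Fin.castLE (hrℓ.trans hℓm) i) ≠ 0}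
  let S := {M : Matrix (Fin ℓ) (Fin m) K // M.rank = 1 ∧
      ∑ i : Fin r, M (Fin.castLE hrℓ i) (Fin.castLE (hrℓ.trans hℓm) i) ≠ 0}
  have htr : ∀ p : P, ∑ i : Fin r,
      (Matrix.vecMulVec p.1.1 p.1.2) (Fin.castLE hrℓ i) (Fin.castLE (hrℓ.trans hℓm) i) ≠ 0 := by
    intro p
    simpa only [Matrix.vecMulVec_apply] using p.2
  have hk : ∀ p : P, p.1.1 (Fin.castLE hrℓ (D (Matrix.vecMulVec p.1.1 p.1.2))) ≠ 0 := by
    intro p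
    have h1 := hD _ (hex _ (htr p))
    rw [Matrix.vecMulVec_apply] at h1
    exact fun h0 => h1 (by rw [h0, zero_mul])
  have hrank : ∀ p : P, (Matrix.vecMulVec p.1.1 p.1.2).rank = 1 := by
    intro p
    obtain ⟨i, -, hi⟩ := Finset.exists_ne_zero_of_sum_ne_zero p.2
    refine aux_rank_vecMulVec_one ?_ ?_
    · intro h0; apply hi; rw [h0]; simp
    · intro h0; apply hi; rw [h0]; simp
  let f : P → S × Kˣ := fun p =>
    (⟨Matrix.vecMulVec p.1.1 p.1.2, hrank p, htr p⟩, Units.mk0 _ (hk p))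
  have finj : Function.Injective f := by
    rintro ⟨⟨u, v⟩, hp⟩ ⟨⟨u', v'⟩, hp'⟩ hff
    have hM : Matrix.vecMulVec u v = Matrix.vecMulVec u' v' :=
      Subtype.ext_iff.mp (congrArg Prod.fst hff)
    have hk' : u (Fin.castLE hrℓ (D (Matrix.vecMulVec u v))) =
        u' (Fin.castLE hrℓ (D (Matrix.vecMulVec u' v'))) :=
      Units.ext_iff.mp (congrArg Prod.snd hff)
    rw [← hM] at hk'
    have hMe : ∀ i j, u i * v j = u' i * v' j := by
      intro i j
      have := congrFun (congrFun hM i) j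
      simpa [Matrix.vecMulVec_apply] using this
    have hsum' : ∑ i : Fin r,
        (Matrix.vecMulVec u v) (Fin.castLE hrℓ i) (Fin.castLE (hrℓ.trans hℓm) i) ≠ 0 := by
      simpa only [Matrix.vecMulVec_apply] using hp
    have hc := hD _ (hex _ hsum')
    rw [Matrix.vecMulVec_apply] at hc
    have hu₀ : u (Fin.castLE hrℓ (D (Matrix.vecMulVec u v))) ≠ 0 := left_ne_zero_of_mul hc
    have hv₀ : v (Fin.castLE (hrℓ.trans hℓm) (D (Matrix.vecMulVec u v))) ≠ 0 :=
      right_ne_zero_of_mul hc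
    have hveq : v (Fin.castLE (hrℓ.trans hℓm) (D (Matrix.vecMulVec u v))) =
        v' (Fin.castLE (hrℓ.trans hℓm) (D (Matrix.vecMulVec u v))) := by
      have h := hMe (Fin.castLE hrℓ (D (Matrix.vecMulVec u v)))
        (Fin.castLE (hrℓ.trans hℓm) (D (Matrix.vecMulVec u v)))
      rw [← hk'] at h
      exact mul_left_cancel₀ hu₀ h
    have hu : u = u' := by
      funext i
      have h := hMe i (Fin.castLE (hrℓ.trans hℓm) (D (Matrix.vecMulVec u v)))
      rw [← hveq] at h
      exact mul_right_cancel₀ hv₀ h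
    have hv : v = v' := by
      funext j
      have h := hMe (Fin.castLE hrℓ (D (Matrix.vecMulVec u v))) j
      rw [← hk'] at h
      exact mul_left_cancel₀ hu₀ h
    exact Subtype.ext (Prod.ext hu hv)
  have fsurj : Function.Surjective f := by
    rintro ⟨⟨M, hMr, hMt⟩, k⟩
    have hi₀ : M (Fin.castLE hrℓ (D M)) (Fin.castLE (hrℓ.trans hℓm) (D M)) ≠ 0 := hD M (hex M hMt)
    set c := M (Fin.castLE hrℓ (D M)) (Fin.castLE (hrℓ.trans hℓm) (D M)) with hc
    have hminor : ∀ i j, M i j * c =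
        M i (Fin.castLE (hrℓ.trans hℓm) (D M)) * M (Fin.castLE hrℓ (D M)) j :=
      fun i j => aux_minor hMr hi₀ i j
    set u : Fin ℓ → K := fun i => (k : K) * c⁻¹ * M i (Fin.castLE (hrℓ.trans hℓm) (D M)) with hu
    set v : Fin m → K := fun j => (k : K)⁻¹ * M (Fin.castLE hrℓ (D M)) j with hv
    have hk0 : (k : K) ≠ 0 := k.ne_zero
    have hMeq : Matrix.vecMulVec u v = M := by
      ext i j
      rw [Matrix.vecMulVec_apply, hu, hv]
      calc (k : K) * c⁻¹ * M i (Fin.castLE (hrℓ.trans hℓm) (D M)) *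
            ((k : K)⁻¹ * M (Fin.castLE hrℓ (D M)) j)
          = (M i (Fin.castLE (hrℓ.trans hℓm) (D M)) * M (Fin.castLE hrℓ (D M)) j) *
            ((k : K) * (k : K)⁻¹) * c⁻¹ := by ring
        _ = (M i j * c) * ((k : K) * (k : K)⁻¹) * c⁻¹ := by rw [← hminor]
        _ = M i j := by
            rw [mul_inv_cancel₀ hk0, mul_one, mul_assoc, mul_inv_cancel₀ hi₀, mul_one]
    have hsum : ∑ i : Fin r, u (Fin.castLE hrℓ i) * v (Fin.castLE (hrℓ.trans hℓm) i) ≠ 0 := by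
      have heach : ∀ i : Fin r, u (Fin.castLE hrℓ i) * v (Fin.castLE (hrℓ.trans hℓm) i) =
          M (Fin.castLE hrℓ i) (Fin.castLE (hrℓ.trans hℓm) i) := by
        intro i
        rw [← Matrix.vecMulVec_apply, hMeq]
      rw [Finset.sum_congr rfl fun i _ => heach i]
      exact hMt
    refine ⟨⟨(u, v), hsum⟩, ?_⟩
    have hDD : D (Matrix.vecMulVec u v) = D M := by rw [hMeq]
    refine Prod.ext (Subtype.ext ?_) (Units.ext ?_)
    · exact hMeq
    · show u (Fin.castLE hrℓ (D (Matrix.vecMulVec u v))) = (k : K)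
      rw [hDD, hu]
      show (k : K) * c⁻¹ * M (Fin.castLE hrℓ (D M)) (Fin.castLE (hrℓ.trans hℓm) (D M)) = (k : K)
      rw [← hc, mul_assoc, inv_mul_cancel₀ hi₀, mul_one]
  have hPS : Nat.card P = Nat.card S * (q - 1) := by
    rw [Nat.card_eq_of_bijective f ⟨finj, fsurj⟩, Nat.card_prod, Nat.card_units,
      Nat.card_eq_fintype_card (α := K), ← hqq]
  have hcardP : Nat.card P = (q ^ ℓ - q ^ (ℓ - r)) * (q ^ m - q ^ (m - 1)) := by
    have e1 : P ≃ Σ u : Fin ℓ → K, {v : Fin m → K //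
        ∑ i : Fin r, u (Fin.castLE hrℓ i) * v (Fin.castLE (hrℓ.trans hℓm) i) ≠ 0} :=
      Equiv.subtypeProdEquivSigmaSubtype (fun (u : Fin ℓ → K) (v : Fin m → K) =>
        ∑ i : Fin r, u (Fin.castLE hrℓ i) * v (Fin.castLE (hrℓ.trans hℓm) i) ≠ 0)
    rw [Nat.card_congr e1, Nat.card_eq_fintype_card, Fintype.card_sigma]
    have hterm : ∀ u : Fin ℓ → K, Fintype.card {v : Fin m → K //
        ∑ i : Fin r, u (Fin.castLE hrℓ i) * v (Fin.castLE (hrℓ.trans hℓm) i) ≠ 0} =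
        if (∃ i : Fin r, u (Fin.castLE hrℓ i) ≠ 0) then (q ^ m - q ^ (m - 1)) else 0 := by
      intro u
      split_ifs with hcase
      · set φ : (Fin m → K) →ₗ[K] K :=
          ∑ i : Fin r, u (Fin.castLE hrℓ i) • LinearMap.proj (Fin.castLE (hrℓ.trans hℓm) i)
          with hφ
        have hφa : ∀ v, φ v =
            ∑ i : Fin r, u (Fin.castLE hrℓ i) * v (Fin.castLE (hrℓ.trans hℓm) i) := by
          intro v
          simp [hφ, LinearMap.sum_apply, LinearMap.smul_apply, LinearMap.proj_apply]
        obtain ⟨i₀, hi₀⟩ := hcase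
        have hφne : φ ≠ 0 := by
          intro h0
          apply hi₀
          have hval := hφa (Pi.single (Fin.castLE (hrℓ.trans hℓm) i₀) 1)
          rw [h0] at hval
          simp only [LinearMap.zero_apply] at hval
          rw [Finset.sum_eq_single i₀ ?_ ?_] at hval
          · rw [Pi.single_eq_same, mul_one] at hval
            exact hval.symm
          · intro b _ hb
            rw [Pi.single_eq_of_ne (fun hbe => hb (Fin.castLE_injective _ hbe)), mul_zero]
          · intro habs
            exact absurd (Finset.mem_univ i₀) habs
        have hcount := aux_card_ne K φ (aux_surj_of_ne_zero φ hφne)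
        rw [← Nat.card_eq_fintype_card]
        have ecard : Nat.card {v : Fin m → K //
            ∑ i : Fin r, u (Fin.castLE hrℓ i) * v (Fin.castLE (hrℓ.trans hℓm) i) ≠ 0} =
            Nat.card {v : Fin m → K // φ v ≠ 0} :=
          Nat.card_congr (Equiv.subtypeEquivRight (fun v => by rw [hφa v]))
        rw [ecard, hcount]
        simp [Module.finrank_fintype_fun_eq_card, hqq]
      · rw [Fintype.card_eq_zero_iff]
        constructor
        rintro ⟨v, hv⟩
        push_neg at hcase
        exact hv (Finset.sum_eq_zero fun i _ => by rw [hcase i, zero_mul])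
    rw [Finset.sum_congr rfl fun u _ => hterm u, Finset.sum_ite, Finset.sum_const,
      Finset.sum_const_zero, add_zero, smul_eq_mul]
    congr 1
    rw [← Fintype.card_subtype]
    set ψ : (Fin ℓ → K) →ₗ[K] (Fin r → K) := LinearMap.funLeft K K (Fin.castLE hrℓ) with hψ
    have hs : Function.Surjective ψ :=
      LinearMap.funLeft_surjective_of_injective K K _ (Fin.castLE_injective _)
    have hiff : ∀ w : Fin ℓ → K, (∃ i : Fin r, w (Fin.castLE hrℓ i) ≠ 0) ↔ ψ w ≠ 0 := by
      intro w
      rw [Ne, funext_iff]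
      push_neg
      rfl
    have hcount := aux_card_ne K ψ hs
    rw [← Nat.card_eq_fintype_card, Nat.card_congr (Equiv.subtypeEquivRight hiff), hcount]
    simp [Module.finrank_fintype_fun_eq_card, hqq]
  have hfinal : (q ^ ℓ - q ^ (ℓ - r)) * (q ^ m - q ^ (m - 1)) =
      (q ^ (ℓ + m - r - 1) * (q ^ r - 1)) * (q - 1) := by
    have e1 : q ^ ℓ - q ^ (ℓ - r) = (q ^ r - 1) * q ^ (ℓ - r) := by
      rw [Nat.sub_mul, one_mul, ← pow_add]
      congr 2
      omega
    have e2 : q ^ m - q ^ (m - 1) = (q - 1) * q ^ (m - 1) := by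
      rw [Nat.sub_mul, one_mul]
      congr 1
      rw [← pow_succ']
      congr 1
      omega
    have e3 : q ^ (ℓ - r) * q ^ (m - 1) = q ^ (ℓ + m - r - 1) := by
      rw [← pow_add]
      congr 1
      omega
    rw [e1, e2, mul_mul_mul_comm, e3]
    ring
  have hq1 : 0 < q - 1 := by omega
  have hkey : Nat.card S * (q - 1) = (q ^ (ℓ + m - r - 1) * (q ^ r - 1)) * (q - 1) := by
    rw [← hPS, hcardP, hfinal]
  exact Nat.eq_of_mul_eq_mul_right hq1 hkey
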